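/- Let f̃ : ℝ → ℝ be continuously differentiable, and let ψ₋ < 0 < ψ₊ satisfy f̃(ψ₋) = f̃(ψ₊), f̃'(ψ±) ≠ 0, and f̃(z) < f̃(ψ±) for all z ∈ (ψ₋, ψ₊). Then the ODE ψ'(ξ) = f̃(ψ₊) - f̃(ψ(ξ)) with ψ(0) = 0 has a solution ψ : ℝ → ℝ that is strictly increasing, takes values in (ψ₋, ψ₊), and satisfies ψ(ξ) → ψ± as ξ → ±∞. -/

import Mathlib

open Set Filter

/-- Existence of a monotone heteroclinic traveling-wave profile for the scalar
profile equation `ψ' = f̃(ψ₊) - f̃(ψ)`. -/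
theorem stmt_13 (f : ℝ → ℝ) (hf : ContDiff ℝ 1 f)
    (ψm ψp : ℝ) (hm : ψm < 0) (hp : 0 < ψp)
    (heq : f ψm = f ψp)
    (hdm : deriv f ψm ≠ 0) (hdp : deriv f ψp ≠ 0)
    (hlt : ∀ z ∈ Ioo ψm ψp, f z < f ψp) :
    ∃ ψ : ℝ → ℝ, ψ 0 = 0 ∧ StrictMono ψ ∧
      (∀ ξ : ℝ, ψ ξ ∈ Ioo ψm ψp) ∧
      (∀ ξ : ℝ, HasDerivAt ψ (f ψp - f (ψ ξ)) ξ) ∧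
      Tendsto ψ atTop (nhds ψp) ∧ Tendsto ψ atBot (nhds ψm) := by
  have hmp : ψm < ψp := hm.trans hp
  have h0 : (0:ℝ) ∈ Ioo ψm ψp := ⟨hm, hp⟩
  set g : ℝ → ℝ := fun t => f ψp - f t with hg_def
  have hgc : Continuous g := continuous_const.sub hf.continuous
  have hgpos : ∀ t ∈ Ioo ψm ψp, 0 < g t := fun t ht => sub_pos.2 (hlt t ht)
  -- Lipschitz type bound
  obtain ⟨M, hM⟩ : ∃ M : ℝ, ∀ x ∈ Icc ψm ψp, ‖deriv f x‖ ≤ M :=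
    isCompact_Icc.exists_bound_of_continuousOn ((hf.continuous_deriv le_rfl).continuousOn)
  set L : ℝ := max M 1 with hL_def
  have hL : (0:ℝ) < L := lt_of_lt_of_le one_pos (le_max_right _ _)
  have hlip : ∀ x ∈ Icc ψm ψp, ∀ y ∈ Icc ψm ψp, ‖f y - f x‖ ≤ L * ‖y - x‖ := by
    intro x hx y hy
    exact Convex.norm_image_sub_le_of_norm_hasDerivWithin_le
      (fun z hz => ((hf.differentiable one_ne_zero z).hasDerivAt).hasDerivWithinAt)
      (fun z hz => (hM z hz).trans (le_max_left _ _)) (convex_Icc _ _) hx hy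
  have gbound_p : ∀ t ∈ Icc ψm ψp, g t ≤ L * (ψp - t) := by
    intro t ht
    have h1 : ‖f ψp - f t‖ ≤ L * ‖ψp - t‖ :=
      hlip t ht ψp (right_mem_Icc.2 hmp.le)
    have h2 : ‖ψp - t‖ = ψp - t := abs_of_nonneg (sub_nonneg.2 ht.2)
    calc g t ≤ ‖f ψp - f t‖ := le_abs_self _
    _ ≤ L * ‖ψp - t‖ := h1
    _ = L * (ψp - t) := by rw [h2]
  have gbound_m : ∀ t ∈ Icc ψm ψp, g t ≤ L * (t - ψm) := by
    intro t ht
    have h1 : ‖f ψm - f t‖ ≤ L * ‖ψm - t‖ :=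
      hlip t ht ψm (left_mem_Icc.2 hmp.le)
    have h2 : ‖ψm - t‖ = t - ψm := by rw [Real.norm_eq_abs, abs_sub_comm, abs_of_nonneg (sub_nonneg.2 ht.1)]
    calc g t = f ψm - f t := by rw [hg_def]; simp [heq]
    _ ≤ ‖f ψm - f t‖ := le_abs_self _
    _ ≤ L * ‖ψm - t‖ := h1
    _ = L * (t - ψm) := by rw [h2]
  -- integrand
  have hGc : ContinuousOn (fun t => (g t)⁻¹) (Ioo ψm ψp) :=
    hgc.continuousOn.inv₀ (fun t ht => (hgpos t ht).ne')
  set F : ℝ → ℝ := fun u => ∫ t in (0:ℝ)..u, (g t)⁻¹ with hF_def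
  have hsub : ∀ u ∈ Ioo ψm ψp, uIcc 0 u ⊆ Ioo ψm ψp := fun u hu =>
    (ordConnected_Ioo).uIcc_subset h0 hu
  have hInt : ∀ u ∈ Ioo ψm ψp, IntervalIntegrable (fun t => (g t)⁻¹) MeasureTheory.volume 0 u := by
    intro u hu
    exact (hGc.mono (hsub u hu)).intervalIntegrable
  have hFd : ∀ u ∈ Ioo ψm ψp, HasDerivAt F (g u)⁻¹ u := by
    intro u hu
    exact intervalIntegral.integral_hasDerivAt_right (hInt u hu)
      ((hgc.measurable.inv.stronglyMeasurable).stronglyMeasurableAtFilter)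
      (hGc.continuousAt (isOpen_Ioo.mem_nhds hu))
  have hFmono : StrictMonoOn F (Ioo ψm ψp) := by
    apply strictMonoOn_of_deriv_pos (convex_Ioo _ _)
      (fun u hu => ((hFd u hu).continuousAt).continuousWithinAt)
    intro u hu
    rw [interior_Ioo] at hu
    rw [(hFd u hu).deriv]
    exact inv_pos.2 (hgpos u hu)
  have hF0 : F 0 = 0 := intervalIntegral.integral_same
  -- upper bound blow up
  have hup : ∀ u ∈ Ioo 0 ψp, L⁻¹ * (Real.log ψp - Real.log (ψp - u)) ≤ F u := by
    intro u hu
    have hu' : u ∈ Ioo ψm ψp := ⟨hm.trans hu.1, hu.2⟩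
    have hcmp : ContinuousOn (fun t => (L * (ψp - t))⁻¹) (Icc 0 u) := by
      apply ContinuousOn.inv₀ (by fun_prop)
      intro t ht
      have : 0 < ψp - t := sub_pos.2 (lt_of_le_of_lt ht.2 hu.2)
      positivity
    have key : (∫ t in (0:ℝ)..u, (L * (ψp - t))⁻¹) ≤ F u := by
      apply intervalIntegral.integral_mono_on hu.1.le
      · exact (hcmp.mono (by rw [uIcc_of_le hu.1.le])).intervalIntegrable
      · exact hInt u hu'
      · intro t ht
        have htI : t ∈ Ioo ψm ψp := ⟨hm.trans_le ht.1, lt_of_le_of_lt ht.2 hu.2⟩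
        exact inv_anti₀ (hgpos t htI)
          (gbound_p t ⟨htI.1.le, htI.2.le⟩)
    have hcalc : (∫ t in (0:ℝ)..u, (L * (ψp - t))⁻¹)
        = L⁻¹ * (Real.log ψp - Real.log (ψp - u)) := by
      have e1 : ∀ t : ℝ, (L * (ψp - t))⁻¹ = L⁻¹ * (ψp - t)⁻¹ := fun t => mul_inv _ _
      simp_rw [e1]
      rw [intervalIntegral.integral_const_mul]
      have e2 : (∫ t in (0:ℝ)..u, (ψp - t)⁻¹) = ∫ s in (ψp - u)..(ψp - 0), s⁻¹ :=
        intervalIntegral.integral_comp_sub_left (fun s => s⁻¹) ψp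
      have hpu : 0 < ψp - u := sub_pos.2 hu.2
      rw [e2, integral_inv]
      · rw [sub_zero, Real.log_div hp.ne' hpu.ne']
      · rw [sub_zero]
        intro hc
        rcases hc with ⟨h1, _⟩
        simp only [inf_le_iff] at h1
        rcases h1 with h1 | h1 <;> linarith
    linarith [key, hcalc.ge]
  have htopF : Tendsto F (nhdsWithin ψp (Iio ψp)) atTop := by
    have h1 : Tendsto (fun u => ψp - u) (nhdsWithin ψp (Iio ψp)) (nhdsWithin 0 (Ioi 0)) := by
      apply tendsto_nhdsWithin_of_tendsto_nhds_of_eventually_within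
      · have : Tendsto (fun u : ℝ => ψp - u) (nhds ψp) (nhds (ψp - ψp)) :=
          tendsto_const_nhds.sub tendsto_id
        simpa using this.mono_left nhdsWithin_le_nhds
      · filter_upwards [self_mem_nhdsWithin] with x hx
        exact sub_pos.2 (mem_Iio.1 hx)
    have h2 : Tendsto (fun u => Real.log (ψp - u)) (nhdsWithin ψp (Iio ψp)) atBot :=
      Real.tendsto_log_nhdsGT_zero.comp h1
    have h3 : Tendsto (fun u => L⁻¹ * (Real.log ψp - Real.log (ψp - u)))
        (nhdsWithin ψp (Iio ψp)) atTop := by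
      have hneg : Tendsto (fun u => -Real.log (ψp - u)) (nhdsWithin ψp (Iio ψp)) atTop :=
        tendsto_neg_atBot_atTop.comp h2
      have h3' := Tendsto.const_mul_atTop (inv_pos.2 hL)
        (tendsto_atTop_add_const_left _ (Real.log ψp) hneg)
      simpa [sub_eq_add_neg] using h3'
    apply tendsto_atTop_mono' _ _ h3
    filter_upwards [Ioo_mem_nhdsLT_of_mem (⟨hp, le_refl ψp⟩ : ψp ∈ Ioc 0 ψp)] with u hu
    exact hup u hu
  -- lower bound blow down
  have hdown : ∀ u ∈ Ioo ψm 0, F u ≤ L⁻¹ * (Real.log (u - ψm) - Real.log (-ψm)) := by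
    intro u hu
    have hu' : u ∈ Ioo ψm ψp := ⟨hu.1, hu.2.trans hp⟩
    have hcmp : ContinuousOn (fun t => (L * (t - ψm))⁻¹) (Icc u 0) := by
      apply ContinuousOn.inv₀ (by fun_prop)
      intro t ht
      have : 0 < t - ψm := sub_pos.2 (lt_of_lt_of_le hu.1 ht.1)
      positivity
    have key : (∫ t in u..(0:ℝ), (L * (t - ψm))⁻¹) ≤ ∫ t in u..(0:ℝ), (g t)⁻¹ := by
      apply intervalIntegral.integral_mono_on hu.2.le
      · exact (hcmp.mono (by rw [uIcc_of_le hu.2.le])).intervalIntegrable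
      · exact ((hInt u hu').symm)
      · intro t ht
        have htI : t ∈ Ioo ψm ψp := ⟨lt_of_lt_of_le hu.1 ht.1, lt_of_le_of_lt ht.2 hp⟩
        exact inv_anti₀ (hgpos t htI) (gbound_m t ⟨htI.1.le, htI.2.le⟩)
    have hcalc : (∫ t in u..(0:ℝ), (L * (t - ψm))⁻¹)
        = L⁻¹ * (Real.log (-ψm) - Real.log (u - ψm)) := by
      have e1 : ∀ t : ℝ, (L * (t - ψm))⁻¹ = L⁻¹ * (t - ψm)⁻¹ := fun t => mul_inv _ _
      simp_rw [e1]
      rw [intervalIntegral.integral_const_mul]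
      have e2 : (∫ t in u..(0:ℝ), (t - ψm)⁻¹) = ∫ s in (u - ψm)..((0:ℝ) - ψm), s⁻¹ :=
        intervalIntegral.integral_comp_sub_right (fun s => s⁻¹) ψm
      have hum : 0 < u - ψm := sub_pos.2 hu.1
      rw [e2, integral_inv]
      · rw [zero_sub, Real.log_div (by linarith) hum.ne']
      · rw [zero_sub]
        intro hc
        rcases hc with ⟨h1, _⟩
        simp only [inf_le_iff] at h1
        rcases h1 with h1 | h1 <;> linarith
    have hFu : F u = -(∫ t in u..(0:ℝ), (g t)⁻¹) := by
      rw [hF_def]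
      exact intervalIntegral.integral_symm u 0
    rw [hFu]
    rw [hcalc] at key
    linarith
  have hbotF : Tendsto F (nhdsWithin ψm (Ioi ψm)) atBot := by
    have h1 : Tendsto (fun u => u - ψm) (nhdsWithin ψm (Ioi ψm)) (nhdsWithin 0 (Ioi 0)) := by
      apply tendsto_nhdsWithin_of_tendsto_nhds_of_eventually_within
      · have : Tendsto (fun u : ℝ => u - ψm) (nhds ψm) (nhds (ψm - ψm)) :=
          tendsto_id.sub tendsto_const_nhds
        simpa using this.mono_left nhdsWithin_le_nhds
      · filter_upwards [self_mem_nhdsWithin] with x hx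
        exact sub_pos.2 (mem_Ioi.1 hx)
    have h2 : Tendsto (fun u => Real.log (u - ψm)) (nhdsWithin ψm (Ioi ψm)) atBot :=
      Real.tendsto_log_nhdsGT_zero.comp h1
    have h3 : Tendsto (fun u => L⁻¹ * (Real.log (u - ψm) - Real.log (-ψm)))
        (nhdsWithin ψm (Ioi ψm)) atBot := by
      have := (tendsto_atBot_add_const_right _ (-Real.log (-ψm)) h2)
      have h4 : Tendsto (fun u => L⁻¹ * (Real.log (u - ψm) + -Real.log (-ψm)))
          (nhdsWithin ψm (Ioi ψm)) atBot := Tendsto.const_mul_atBot (inv_pos.2 hL) this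
      simpa [sub_eq_add_neg] using h4
    apply tendsto_atBot_mono' _ _ h3
    filter_upwards [Ioo_mem_nhdsGT_of_mem (⟨le_refl ψm, hm⟩ : ψm ∈ Ico ψm 0)] with u hu
    exact hdown u hu
  -- surjectivity
  have hsurj : ∀ y : ℝ, ∃ u ∈ Ioo ψm ψp, F u = y := by
    intro y
    obtain ⟨b, hby, hbI⟩ : ∃ b, y < F b ∧ b ∈ Ioo ψm ψp := by
      have hmem : ∀ᶠ u in nhdsWithin ψp (Iio ψp), u ∈ Ioo ψm ψp :=
        Ioo_mem_nhdsLT_of_mem (⟨hmp, le_refl ψp⟩ : ψp ∈ Ioc ψm ψp)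
      exact ((htopF.eventually_gt_atTop y).and hmem).exists
    obtain ⟨a, hay, haI⟩ : ∃ a, F a < y ∧ a ∈ Ioo ψm ψp := by
      have hmem : ∀ᶠ u in nhdsWithin ψm (Ioi ψm), u ∈ Ioo ψm ψp :=
        Ioo_mem_nhdsGT_of_mem (⟨le_refl ψm, hmp⟩ : ψm ∈ Ico ψm ψp)
      exact ((hbotF.eventually_lt_atBot y).and hmem).exists
    have hab : a < b := (hFmono.lt_iff_lt haI hbI).1 (hay.trans hby)
    have hIccsub : Icc a b ⊆ Ioo ψm ψp := fun x hx => ⟨haI.1.trans_le hx.1, lt_of_le_of_lt hx.2 hbI.2⟩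
    have hc : ContinuousOn F (Icc a b) := fun x hx =>
      ((hFd x (hIccsub hx)).continuousAt).continuousWithinAt
    obtain ⟨u, hu, hFu⟩ := intermediate_value_Icc hab.le hc ⟨hay.le, hby.le⟩
    exact ⟨u, hIccsub hu, hFu⟩
  choose ψ hψI hψF using hsurj
  have hψmono : StrictMono ψ := by
    intro y₁ y₂ h
    apply (hFmono.lt_iff_lt (hψI y₁) (hψI y₂)).1
    rw [hψF, hψF]; exact h
  have hψ0 : ψ 0 = 0 := by
    apply hFmono.injOn (hψI 0) h0
    rw [hψF, hF0]
  -- derivative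
  have hψd : ∀ ξ : ℝ, HasDerivAt ψ (f ψp - f (ψ ξ)) ξ := by
    intro ξ
    have hmem := hψI ξ
    have hcont : ContinuousAt ψ ξ := by
      rw [ContinuousAt]
      apply tendsto_order.2
      constructor
      · intro b hb
        obtain ⟨u, hu⟩ : (Ioo (max b ψm) (ψ ξ)).Nonempty :=
          nonempty_Ioo.2 (max_lt hb hmem.1)
        have huI : u ∈ Ioo ψm ψp := ⟨(le_max_right b ψm).trans_lt hu.1, hu.2.trans hmem.2⟩
        have hFuξ : F u < ξ := by
          rw [← hψF ξ]; exact hFmono huI hmem hu.2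
        filter_upwards [Ioi_mem_nhds hFuξ] with y hy
        have : u < ψ y := by
          apply (hFmono.lt_iff_lt huI (hψI y)).1
          rw [hψF]; exact hy
        exact ((le_max_left b ψm).trans_lt hu.1).trans this
      · intro b hb
        obtain ⟨u, hu⟩ : (Ioo (ψ ξ) (min b ψp)).Nonempty :=
          nonempty_Ioo.2 (lt_min hb hmem.2)
        have huI : u ∈ Ioo ψm ψp := ⟨hmem.1.trans hu.1, hu.2.trans_le (min_le_right b ψp)⟩
        have hFuξ : ξ < F u := by
          rw [← hψF ξ]; exact hFmono hmem huI hu.1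
        filter_upwards [Iio_mem_nhds hFuξ] with y hy
        have : ψ y < u := by
          apply (hFmono.lt_iff_lt (hψI y) huI).1
          rw [hψF]; exact hy
        exact this.trans (hu.2.trans_le (min_le_left b ψp))
    have hg0 : ((g (ψ ξ))⁻¹ : ℝ) ≠ 0 := inv_ne_zero (hgpos _ hmem).ne'
    have := HasDerivAt.of_local_left_inverse hcont (hFd (ψ ξ) hmem) hg0
      (Eventually.of_forall hψF)
    rw [inv_inv] at this
    exact this
  -- limits
  have hψtop : Tendsto ψ atTop (nhds ψp) := by
    apply tendsto_order.2
    constructor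
    · intro b hb
      obtain ⟨u, hu⟩ : (Ioo (max b ψm) ψp).Nonempty := nonempty_Ioo.2 (max_lt hb hmp)
      have huI : u ∈ Ioo ψm ψp := ⟨(le_max_right b ψm).trans_lt hu.1, hu.2⟩
      filter_upwards [eventually_gt_atTop (F u)] with y hy
      have : u < ψ y := by
        apply (hFmono.lt_iff_lt huI (hψI y)).1
        rw [hψF]; exact hy
      exact ((le_max_left b ψm).trans_lt hu.1).trans this
    · intro b hb
      exact Eventually.of_forall fun y => (hψI y).2.trans hb
  have hψbot : Tendsto ψ atBot (nhds ψm) := by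
    apply tendsto_order.2
    constructor
    · intro b hb
      exact Eventually.of_forall fun y => hb.trans (hψI y).1
    · intro b hb
      obtain ⟨u, hu⟩ : (Ioo ψm (min b ψp)).Nonempty := nonempty_Ioo.2 (lt_min hb hmp)
      have huI : u ∈ Ioo ψm ψp := ⟨hu.1, hu.2.trans_le (min_le_right b ψp)⟩
      filter_upwards [eventually_lt_atBot (F u)] with y hy
      have : ψ y < u := by
        apply (hFmono.lt_iff_lt (hψI y) huI).1
        rw [hψF]; exact hy
      exact this.trans (hu.2.trans_le (min_le_left b ψp))
  exact ⟨ψ, hψ0, hψmono, hψI, hψd, hψtop, hψbot⟩
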